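/- For all integers n ≥ 0, d_3(4n+3) ≡ 0 (mod 4). -/

import Mathlib

open PowerSeries Finset

namespace D3Aux

variable {A B : Type*} [CommRing A] [CommRing B]

lemma inv_unique {a b c : A} (ha : c * a = 1) (hb : c * b = 1) : a = b := by
  calc a = a * (c * b) := by rw [hb, mul_one]
    _ = (c * a) * b := by ring
    _ = b := by rw [ha, one_mul]

lemma mul_cancel_unit {a b c d : A} (h : a * c = b * c) (hc : c * d = 1) : a = b := by
  calc a = a * (c * d) := by rw [hc, mul_one]
    _ = (a * c) * d := by ring
    _ = (b * c) * d := by rw [h]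
    _ = b * (c * d) := by ring
    _ = b := by rw [hc, mul_one]

/-- Geometric-type series `∑_{m ∣ j} q^j`. -/
noncomputable def geom (A : Type*) [CommRing A] (m : ℕ) : PowerSeries A :=
  PowerSeries.mk fun j => if m ∣ j then 1 else 0

lemma geom_spec {m : ℕ} (hm : 0 < m) : (1 - X ^ m : PowerSeries A) * geom A m = 1 := by
  have h : (1 - X ^ m : PowerSeries A) * geom A m = geom A m - geom A m * X ^ m := by ring
  rw [h]
  ext j
  rw [map_sub, coeff_mul_X_pow', geom, coeff_mk, coeff_one]
  rcases Nat.eq_zero_or_pos j with rfl | hj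
  · simp [Nat.not_le.mpr hm]
  · by_cases hd : m ∣ j
    · have hle : m ≤ j := Nat.le_of_dvd hj hd
      have : m ∣ j - m := Nat.dvd_sub hd dvd_rfl
      simp [hd, hle, this, coeff_mk, hj.ne']
    · by_cases hle : m ≤ j
      · have : ¬ m ∣ j - m := by
          intro hc
          have := Nat.dvd_add hc (dvd_refl m)
          rw [Nat.sub_add_cancel hle] at this
          exact hd this
        simp [hd, hle, this, hj.ne']
      · simp [hd, hle, hj.ne']

/-- The inverse of `1 - X^m` as constructed via `invOfUnit`. -/
noncomputable def invu (A : Type*) [CommRing A] (m : ℕ) : PowerSeries A :=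
  PowerSeries.invOfUnit (1 - X ^ m) 1

lemma constCoeff_one_sub_X_pow {m : ℕ} (hm : 0 < m) :
    constantCoeff (R := A) (1 - X ^ m) = 1 := by
  rw [map_sub, map_one, map_pow, constantCoeff_X, zero_pow hm.ne', sub_zero]

lemma invu_spec {m : ℕ} (hm : 0 < m) : (1 - X ^ m : PowerSeries A) * invu A m = 1 :=
  PowerSeries.mul_invOfUnit _ 1 (by simpa using constCoeff_one_sub_X_pow (A := A) hm)

lemma invu_eq_geom {m : ℕ} (hm : 0 < m) : invu A m = geom A m :=
  inv_unique (invu_spec hm) (geom_spec hm)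

lemma coeff_invu {m j : ℕ} (hm : 0 < m) :
    (PowerSeries.coeff (R := A) j) (invu A m) = if m ∣ j then 1 else 0 := by
  rw [invu_eq_geom hm, geom, coeff_mk]

lemma map_invu (φ : A →+* B) {m : ℕ} (hm : 0 < m) :
    PowerSeries.map φ (invu A m) = invu B m := by
  refine inv_unique (c := 1 - X ^ m) ?_ (invu_spec hm)
  have h := congrArg (PowerSeries.map φ) (invu_spec (A := A) hm)
  rw [map_mul, map_sub, map_one, map_pow, PowerSeries.map_X] at h
  exact h

lemma four_ps (h4 : (4 : A) = 0) : (4 : PowerSeries A) = 0 := by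
  rw [← map_ofNat (C (R := A)) 4, h4, map_zero]

lemma factor_eq (h4 : (4 : A) = 0) {i : ℕ} (hi : 0 < i) :
    (1 - X ^ (2 * i) : PowerSeries A) ^ 3 * invu A i ^ 10 =
      invu A (4 * i) * (1 + 2 * (invu A (2 * i) * X ^ i)) := by
  have h2i : 0 < 2 * i := by omega
  have h4i : 0 < 4 * i := by omega
  have sa := invu_spec (A := A) hi
  have sb := invu_spec (A := A) h2i
  have se := invu_spec (A := A) h4i
  set a' := invu A i
  set b' := invu A (2 * i)
  set e' := invu A (4 * i)
  refine mul_cancel_unit (c := (1 - X ^ i) ^ 10 * (1 - X ^ (4 * i)) * (1 - X ^ (2 * i)))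
    (d := a' ^ 10 * e' * b') ?_ ?_
  · have e1 : (1 - X ^ (2 * i) : PowerSeries A) ^ 3 * a' ^ 10 *
        ((1 - X ^ i) ^ 10 * (1 - X ^ (4 * i)) * (1 - X ^ (2 * i))) =
        ((1 - X ^ i) * a') ^ 10 * ((1 - X ^ (2 * i)) ^ 4 * (1 - X ^ (4 * i))) := by ring
    have e2 : (e' * (1 + 2 * (b' * X ^ i))) *
        ((1 - X ^ i) ^ 10 * (1 - X ^ (4 * i)) * (1 - X ^ (2 * i))) =
        ((1 - X ^ (4 * i)) * e') * ((1 - X ^ i) ^ 10 * (1 - X ^ (2 * i)))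
          + ((1 - X ^ (4 * i)) * e') * ((1 - X ^ (2 * i)) * b') *
            (2 * X ^ i * (1 - X ^ i) ^ 10) := by ring
    rw [e1, e2, sa, se, sb, one_pow, one_mul, one_mul, one_mul]
    have hx2 : (X : PowerSeries A) ^ (2 * i) = (X ^ i) ^ 2 := by
      rw [← pow_mul, mul_comm]
    have hx4 : (X : PowerSeries A) ^ (4 * i) = (X ^ i) ^ 4 := by
      rw [← pow_mul, mul_comm]
    rw [hx2, hx4]
    set x := (X : PowerSeries A) ^ i
    have h4S : (4 : PowerSeries A) = 0 := four_ps h4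
    linear_combination (2*x - 7*x^2 + 5*x^3 + 20*x^4 - 72*x^5 + 126*x^6 - 138*x^7
      + 100*x^8 - 50*x^9 + 17*x^10 - 3*x^11) * h4S
  · have : ((1 - X ^ i) ^ 10 * (1 - X ^ (4 * i)) * (1 - X ^ (2 * i))) *
        (a' ^ 10 * e' * b') =
        ((1 - X ^ i) * a') ^ 10 * ((1 - X ^ (4 * i)) * e') * ((1 - X ^ (2 * i)) * b') := by
      ring
    rw [this, sa, se, sb, one_pow, one_mul, one_mul]

lemma prod_one_add_two_mul (h4 : (4 : A) = 0) (s : Finset ℕ) (t : ℕ → A) :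
    ∏ i ∈ s, (1 + 2 * t i) = 1 + 2 * ∑ i ∈ s, t i := by
  induction s using Finset.cons_induction with
  | empty => simp
  | cons a s ha ih =>
    rw [Finset.prod_cons, ih, Finset.sum_cons]
    linear_combination (t a * ∑ i ∈ s, t i) * h4

lemma coeff_prod_eq_zero (s : Finset ℕ) (f : ℕ → PowerSeries A)
    (hf : ∀ i ∈ s, ∀ m : ℕ, ¬ (4 ∣ m) → PowerSeries.coeff (R := A) m (f i) = 0) :
    ∀ m : ℕ, ¬ (4 ∣ m) → PowerSeries.coeff (R := A) m (∏ i ∈ s, f i) = 0 := by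
  induction s using Finset.cons_induction with
  | empty =>
    intro m hm
    rw [Finset.prod_empty, coeff_one, if_neg (by omega)]
  | cons a s ha ih =>
    intro m hm
    rw [Finset.prod_cons, coeff_mul]
    refine Finset.sum_eq_zero fun p hp => ?_
    rw [Finset.HasAntidiagonal.mem_antidiagonal] at hp
    have : ¬ (4 ∣ p.1) ∨ ¬ (4 ∣ p.2) := by omega
    rcases this with h | h
    · rw [hf a (Finset.mem_cons_self a s) p.1 h, zero_mul]
    · rw [ih (fun i hi => hf i (Finset.mem_cons_of_mem hi)) p.2 h, mul_zero]

lemma coeff_invu_four {i m : ℕ} (hi : 0 < i) (hm : ¬ (4 ∣ m)) :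
    PowerSeries.coeff (R := A) m (invu A (4 * i)) = 0 := by
  rw [coeff_invu (by omega), if_neg]
  intro hc
  exact hm (dvd_trans ⟨i, rfl⟩ hc)

lemma not_square_of_mod4 {b : ℕ} (hb : b % 4 = 3) : ∀ r : ℕ, r * r ≠ b := by
  intro r h
  have h1 : r % 4 < 4 := Nat.mod_lt _ (by omega)
  have h2 : r * r % 4 = (r % 4) * (r % 4) % 4 := by
    conv_lhs => rw [Nat.mul_mod]
  interval_cases hr : r % 4 <;> omega

lemma even_card_divisors {b : ℕ} (hb : b % 4 = 3) : ∃ c, b.divisors.card = 2 * c := by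
  have hb0 : b ≠ 0 := by omega
  have hnsq := not_square_of_mod4 hb
  have key : ((b.divisors.filter fun i => i * i < b)).card =
      ((b.divisors.filter fun i => b < i * i)).card := by
    refine Finset.card_bij' (fun i _ => b / i) (fun i _ => b / i) ?_ ?_ ?_ ?_
    · intro i hi
      rw [Finset.mem_filter, Nat.mem_divisors] at hi ⊢
      obtain ⟨⟨hd, _⟩, hlt⟩ := hi
      have hip : 0 < i := Nat.pos_of_mem_divisors (Nat.mem_divisors.mpr ⟨hd, hb0⟩)
      obtain ⟨k, hk⟩ := hd
      have hkd : b / i = k := by rw [hk, Nat.mul_div_cancel_left _ hip]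
      have hik : i < k := by
        by_contra hle
        push_neg at hle
        have : k * i ≤ i * i := Nat.mul_le_mul_right i hle
        rw [mul_comm k i, ← hk] at this
        omega
      refine ⟨⟨⟨i, by rw [hkd, hk]; ring⟩, hb0⟩, ?_⟩
      rw [hkd, hk]
      exact (Nat.mul_lt_mul_right (by omega)).mpr hik
    · intro i hi
      rw [Finset.mem_filter, Nat.mem_divisors] at hi ⊢
      obtain ⟨⟨hd, _⟩, hlt⟩ := hi
      have hip : 0 < i := Nat.pos_of_mem_divisors (Nat.mem_divisors.mpr ⟨hd, hb0⟩)
      obtain ⟨k, hk⟩ := hd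
      have hkd : b / i = k := by rw [hk, Nat.mul_div_cancel_left _ hip]
      have hik : k < i := by
        by_contra hle
        push_neg at hle
        have : i * i ≤ i * k := Nat.mul_le_mul_left i hle
        rw [← hk] at this
        omega
      have hkp : 0 < k := by
        rcases Nat.eq_zero_or_pos k with rfl | h
        · omega
        · exact h
      refine ⟨⟨⟨i, by rw [hkd, hk]; ring⟩, hb0⟩, ?_⟩
      rw [hkd, hk]
      exact (Nat.mul_lt_mul_right hkp).mpr hik
    · intro i hi
      rw [Finset.mem_filter, Nat.mem_divisors] at hi
      exact Nat.div_div_self hi.1.1 hb0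
    · intro i hi
      rw [Finset.mem_filter, Nat.mem_divisors] at hi
      exact Nat.div_div_self hi.1.1 hb0
  have hsplit := Finset.card_filter_add_card_filter_not
    (s := b.divisors) (p := fun i => i * i < b)
  have heq : (b.divisors.filter fun i => ¬ i * i < b) =
      (b.divisors.filter fun i => b < i * i) := by
    apply Finset.filter_congr
    intro i hi
    have := hnsq i
    omega
  rw [heq] at hsplit
  refine ⟨(b.divisors.filter fun i => i * i < b).card, ?_⟩
  omega

lemma filter_eq_divisors {N b : ℕ} (hb4 : b % 4 = 3) (hbN : b ≤ N) :
    ((Icc 1 N).filter fun i => i ≤ b ∧ 2 * i ∣ b - i) = b.divisors := by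
  have hb0 : b ≠ 0 := by omega
  ext i
  rw [Finset.mem_filter, Finset.mem_Icc, Nat.mem_divisors]
  constructor
  · rintro ⟨⟨h1, hNle⟩, hib, ⟨m, hm⟩⟩
    have hb' : b = 2 * i * m + i := Nat.eq_add_of_sub_eq hib hm
    exact ⟨⟨2 * m + 1, by rw [hb']; ring⟩, hb0⟩
  · rintro ⟨hd, -⟩
    have hip : 0 < i := Nat.pos_of_dvd_of_pos hd (by omega)
    have hib : i ≤ b := Nat.le_of_dvd (by omega) hd
    obtain ⟨k, hk⟩ := hd
    refine ⟨⟨hip, le_trans hib hbN⟩, hib, ?_⟩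
    rcases Nat.even_or_odd k with ⟨m, hm'⟩ | ⟨m, hm'⟩
    · exfalso
      obtain ⟨c, hc⟩ : ∃ c, b = 2 * c := ⟨i * m, by rw [hk, hm']; ring⟩
      omega
    · exact ⟨m, Nat.sub_eq_of_eq_add (by rw [hk, hm']; ring)⟩

lemma coeff_T_eq_zero {N b : ℕ} (hb4 : b % 4 = 3) (hbN : b ≤ N) :
    PowerSeries.coeff (R := (ZMod 2)) b (∑ i ∈ Icc 1 N, invu (ZMod 2) (2 * i) * X ^ i) = 0 := by
  rw [map_sum]
  have hterm : ∀ i ∈ Icc 1 N, PowerSeries.coeff (R := (ZMod 2)) b (invu (ZMod 2) (2 * i) * X ^ i)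
      = if i ≤ b ∧ 2 * i ∣ b - i then 1 else 0 := by
    intro i hi
    rw [Finset.mem_Icc] at hi
    rw [PowerSeries.coeff_mul_X_pow', coeff_invu (by omega)]
    by_cases h1 : i ≤ b
    · by_cases h2 : 2 * i ∣ b - i
      · simp [h1, h2]
      · simp [h1, h2]
    · simp [h1]
  rw [Finset.sum_congr rfl hterm, Finset.sum_boole, filter_eq_divisors hb4 hbN]
  obtain ⟨c, hc⟩ := even_card_divisors hb4
  rw [hc, Nat.cast_mul]
  have h2 : ((2 : ℕ) : ZMod 2) = 0 := by decide
  rw [h2, zero_mul]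

end D3Aux
/-- `elongatedDiamond k n` (written `d_k(n)` in the paper) is the coefficient of `q^n` in the
formal power series `∏_{i ≥ 1} (1 - q^(2i))^k / ∏_{i ≥ 1} (1 - q^i)^(3k+1)`.
Since every factor with index `i > n` is congruent to `1` modulo `q^(n+1)`, this coefficient
equals the coefficient of `q^n` in the finite product over `1 ≤ i ≤ n`. -/
noncomputable def elongatedDiamond (k n : ℕ) : ℤ :=
  PowerSeries.coeff (R := ℤ) n
    (∏ i ∈ Finset.Icc 1 n,
      ((1 - (PowerSeries.X : PowerSeries ℤ) ^ (2 * i)) ^ k *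
        (PowerSeries.invOfUnit (1 - (PowerSeries.X : PowerSeries ℤ) ^ i) 1) ^ (3 * k + 1)))

open D3Aux PowerSeries Finset in
theorem d3_mod4 (n : ℕ) : (4 : ℤ) ∣ elongatedDiamond 3 (4 * n + 3) := by
  set N := 4 * n + 3 with hN
  rw [show (4:ℤ) = ((4:ℕ):ℤ) by norm_num, ← ZMod.intCast_zmod_eq_zero_iff_dvd]
  unfold elongatedDiamond
  set φ : ℤ →+* ZMod 4 := Int.castRingHom (ZMod 4) with hφ
  have h4 : (4 : ZMod 4) = 0 := by decide
  -- push the cast inside as a map of power series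
  have cast_eq :
      ((PowerSeries.coeff (R := ℤ) N (∏ i ∈ Finset.Icc 1 N,
          ((1 - (PowerSeries.X : PowerSeries ℤ) ^ (2 * i)) ^ 3 *
            (PowerSeries.invOfUnit (1 - (PowerSeries.X : PowerSeries ℤ) ^ i) 1) ^ (3 * 3 + 1))) : ℤ)
        : ZMod 4) =
      PowerSeries.coeff (R := (ZMod 4)) N (∏ i ∈ Finset.Icc 1 N,
          ((1 - (PowerSeries.X : PowerSeries (ZMod 4)) ^ (2 * i)) ^ 3 *
            (invu (ZMod 4) i) ^ 10)) := by
    rw [show ((((PowerSeries.coeff (R := ℤ) N) _ : ℤ)) : ZMod 4) = φ ((PowerSeries.coeff (R := ℤ) N) _) from rfl,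
      ← PowerSeries.coeff_map, map_prod]
    congr 1
    refine Finset.prod_congr rfl fun i hi => ?_
    rw [Finset.mem_Icc] at hi
    have hi1 : 0 < i := hi.1
    rw [map_mul, map_pow, map_pow, map_sub, map_one, map_pow, PowerSeries.map_X]
    rw [show (PowerSeries.invOfUnit (1 - (PowerSeries.X : PowerSeries ℤ) ^ i) 1) = invu ℤ i from rfl,
      map_invu φ hi1]
  rw [cast_eq]
  -- rewrite each factor
  have hprod : (∏ i ∈ Finset.Icc 1 N,
      ((1 - (PowerSeries.X : PowerSeries (ZMod 4)) ^ (2 * i)) ^ 3 * (invu (ZMod 4) i) ^ 10)) =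
      (∏ i ∈ Finset.Icc 1 N, invu (ZMod 4) (4 * i)) *
        (1 + 2 * ∑ i ∈ Finset.Icc 1 N, invu (ZMod 4) (2 * i) * X ^ i) := by
    rw [Finset.prod_congr rfl fun i hi => factor_eq h4 (by rw [Finset.mem_Icc] at hi; omega),
      Finset.prod_mul_distrib, prod_one_add_two_mul (four_ps h4)]
  rw [hprod]
  set Z := ∏ i ∈ Finset.Icc 1 N, invu (ZMod 4) (4 * i) with hZ
  set T := ∑ i ∈ Finset.Icc 1 N, invu (ZMod 4) (2 * i) * X ^ i with hT
  have hsplit : Z * (1 + 2 * T) = Z + PowerSeries.C (R := ZMod 4) 2 * (Z * T) := by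
    rw [map_ofNat (PowerSeries.C (R := ZMod 4)) 2]; ring
  rw [hsplit, map_add, PowerSeries.coeff_C_mul]
  have hZ0 : PowerSeries.coeff (R := (ZMod 4)) N Z = 0 := by
    refine coeff_prod_eq_zero _ _ (fun i hi m hm => coeff_invu_four ?_ hm) N (by omega)
    rw [Finset.mem_Icc] at hi; omega
  rw [hZ0, zero_add]
  -- the remaining term is 2 * x with x ≡ 0 mod 2
  set x := PowerSeries.coeff (R := (ZMod 4)) N (Z * T) with hx
  set π : ZMod 4 →+* ZMod 2 := ZMod.castHom (by norm_num : (2:ℕ) ∣ 4) (ZMod 2) with hπ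
  have hπx : π x = 0 := by
    rw [hx, show π ((PowerSeries.coeff (R := (ZMod 4)) N) (Z * T)) =
      PowerSeries.coeff (R := (ZMod 2)) N (PowerSeries.map π (Z * T)) from (PowerSeries.coeff_map _ _ _).symm]
    rw [map_mul]
    have hZ2 : PowerSeries.map π Z = ∏ i ∈ Finset.Icc 1 N, invu (ZMod 2) (4 * i) := by
      rw [hZ, map_prod]
      exact Finset.prod_congr rfl fun i hi =>
        map_invu π (by rw [Finset.mem_Icc] at hi; omega)
    have hT2 : PowerSeries.map π T = ∑ i ∈ Finset.Icc 1 N, invu (ZMod 2) (2 * i) * X ^ i := by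
      rw [hT, map_sum]
      refine Finset.sum_congr rfl fun i hi => ?_
      rw [Finset.mem_Icc] at hi
      rw [map_mul, map_pow, PowerSeries.map_X, map_invu π (by omega)]
    rw [hZ2, hT2, PowerSeries.coeff_mul]
    refine Finset.sum_eq_zero fun p hp => ?_
    rw [Finset.HasAntidiagonal.mem_antidiagonal] at hp
    by_cases h4a : 4 ∣ p.1
    · have hb4 : p.2 % 4 = 3 := by omega
      have hbN : p.2 ≤ N := by omega
      rw [coeff_T_eq_zero hb4 hbN, mul_zero]
    · rw [coeff_prod_eq_zero _ _ (fun i hi m hm => coeff_invu_four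
        (by rw [Finset.mem_Icc] at hi; omega) hm) p.1 h4a, zero_mul]
  have key : ∀ y : ZMod 4,
      ZMod.castHom (by norm_num : (2:ℕ) ∣ 4) (ZMod 2) y = 0 → 2 * y = 0 := by decide
  exact key x hπx
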